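/- With the block algebra A_X = [[D₂, X],[0, D₁]] ⊆ B(H₂ ⊕ H₁) built from a Δ-extension of an operator space X (i.e., X = closure(span(D₂ X)) = closure(span(X D₁)) for C*-algebras D₁, D₂), the pair (A_X, Δ(A_X)) is a Δ-pair: A_X = closure(span(A_X Δ(A_X))) = closure(span(Δ(A_X) A_X)). -/

import Mathlib

open ContinuousLinearMap

noncomputable section

/-- Norm closure of the linear span of a set of operators. -/
def csp {E : Type*} [NormedAddCommGroup E] [NormedSpace ℂ E] (S : Set E) : Set E :=
  closure (Submodule.span ℂ S : Set E)

/-- The block upper-triangular operator `[[d₂, x],[0, d₁]]` on `H₂ ⊕ H₁`. -/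
def blockOp {H₁ H₂ : Type*}
    [NormedAddCommGroup H₁] [InnerProductSpace ℂ H₁] [CompleteSpace H₁]
    [NormedAddCommGroup H₂] [InnerProductSpace ℂ H₂] [CompleteSpace H₂]
    (d₂ : H₂ →L[ℂ] H₂) (x : H₁ →L[ℂ] H₂) (d₁ : H₁ →L[ℂ] H₁) :
    WithLp 2 (H₂ × H₁) →L[ℂ] WithLp 2 (H₂ × H₁) :=
  ((WithLp.prodContinuousLinearEquiv 2 ℂ H₂ H₁).symm : H₂ × H₁ →L[ℂ] WithLp 2 (H₂ × H₁)) ∘L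
    ((d₂.comp (fst ℂ H₂ H₁) + x.comp (snd ℂ H₂ H₁)).prod (d₁.comp (snd ℂ H₂ H₁))) ∘L
    ((WithLp.prodContinuousLinearEquiv 2 ℂ H₂ H₁) : WithLp 2 (H₂ × H₁) →L[ℂ] H₂ × H₁)

namespace Stmt12Aux

open Filter Topology

variable {H₁ H₂ : Type*}
    [NormedAddCommGroup H₁] [InnerProductSpace ℂ H₁] [CompleteSpace H₁]
    [NormedAddCommGroup H₂] [InnerProductSpace ℂ H₂] [CompleteSpace H₂]

lemma blockOp_apply (d : H₂ →L[ℂ] H₂) (x : H₁ →L[ℂ] H₂) (e : H₁ →L[ℂ] H₁)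
    (v : WithLp 2 (H₂ × H₁)) :
    blockOp d x e v = (WithLp.prodContinuousLinearEquiv 2 ℂ H₂ H₁).symm
      (d ((WithLp.prodContinuousLinearEquiv 2 ℂ H₂ H₁) v).1
        + x ((WithLp.prodContinuousLinearEquiv 2 ℂ H₂ H₁) v).2,
       e ((WithLp.prodContinuousLinearEquiv 2 ℂ H₂ H₁) v).2) := rfl

lemma blockOp_comp (d d' : H₂ →L[ℂ] H₂) (x x' : H₁ →L[ℂ] H₂) (e e' : H₁ →L[ℂ] H₁) :
    blockOp d x e ∘L blockOp d' x' e'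
      = blockOp (d ∘L d') (d ∘L x' + x ∘L e') (e ∘L e') := by
  ext v
  simp [blockOp_apply]
  abel

lemma blockOp_add (d d' : H₂ →L[ℂ] H₂) (x x' : H₁ →L[ℂ] H₂) (e e' : H₁ →L[ℂ] H₁) :
    blockOp (d + d') (x + x') (e + e') = blockOp d x e + blockOp d' x' e' := by
  ext v
  simp only [blockOp_apply, ContinuousLinearMap.add_apply, WithLp.prodContinuousLinearEquiv_symm_apply, ← WithLp.toLp_add,
    Prod.mk_add_mk]
  refine congrArg _ (Prod.ext ?_ ?_) <;> simp <;> abel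

lemma blockOp_smul (c : ℂ) (d : H₂ →L[ℂ] H₂) (x : H₁ →L[ℂ] H₂) (e : H₁ →L[ℂ] H₁) :
    blockOp (c • d) (c • x) (c • e) = c • blockOp d x e := by
  ext v
  simp only [blockOp_apply, ContinuousLinearMap.coe_smul', Pi.smul_apply,
    WithLp.prodContinuousLinearEquiv_symm_apply, ← WithLp.toLp_smul, Prod.smul_mk]
  refine congrArg _ (Prod.ext ?_ ?_) <;> simp

lemma blockOp_zero : (blockOp 0 0 0 : WithLp 2 (H₂ × H₁) →L[ℂ] WithLp 2 (H₂ × H₁)) = 0 := by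
  ext v <;> simp [blockOp_apply]


lemma adjoint_blockOp_diag (d : H₂ →L[ℂ] H₂) (e : H₁ →L[ℂ] H₁) :
    adjoint (blockOp d 0 e) = blockOp (adjoint d) 0 (adjoint e) := by
  symm
  rw [eq_adjoint_iff]
  intro v w
  simp [blockOp_apply, WithLp.prod_inner_apply, adjoint_inner_left]

lemma offdiag_eq_zero {e₂ d₂ : H₂ →L[ℂ] H₂} {y x : H₁ →L[ℂ] H₂} {e₁ d₁ : H₁ →L[ℂ] H₁}
    (h : blockOp e₂ y e₁ = adjoint (blockOp d₂ x d₁)) : y = 0 := by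
  ext h₁
  have h2 : ∀ k₂ : H₂, (inner ℂ (y h₁) k₂ : ℂ) = 0 := by
    intro k₂
    have h3 := congrArg (fun T : WithLp 2 (H₂ × H₁) →L[ℂ] WithLp 2 (H₂ × H₁) =>
      (inner ℂ (T ((WithLp.prodContinuousLinearEquiv 2 ℂ H₂ H₁).symm (0, h₁)))
        ((WithLp.prodContinuousLinearEquiv 2 ℂ H₂ H₁).symm (k₂, 0)) : ℂ)) h
    simpa [blockOp_apply, WithLp.prod_inner_apply, adjoint_inner_left] using h3
  simpa using h2 (y h₁)

def blkA₂ : WithLp 2 (H₂ × H₁) →L[ℂ] H₂ :=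
  (fst ℂ H₂ H₁) ∘L ((WithLp.prodContinuousLinearEquiv 2 ℂ H₂ H₁ :
    WithLp 2 (H₂ × H₁) →L[ℂ] H₂ × H₁))

def blkA₁ : WithLp 2 (H₂ × H₁) →L[ℂ] H₁ :=
  (snd ℂ H₂ H₁) ∘L ((WithLp.prodContinuousLinearEquiv 2 ℂ H₂ H₁ :
    WithLp 2 (H₂ × H₁) →L[ℂ] H₂ × H₁))

def blkB₂ : H₂ →L[ℂ] WithLp 2 (H₂ × H₁) :=
  ((WithLp.prodContinuousLinearEquiv 2 ℂ H₂ H₁).symm :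
    H₂ × H₁ →L[ℂ] WithLp 2 (H₂ × H₁)) ∘L (inl ℂ H₂ H₁)

def blkB₁ : H₁ →L[ℂ] WithLp 2 (H₂ × H₁) :=
  ((WithLp.prodContinuousLinearEquiv 2 ℂ H₂ H₁).symm :
    H₂ × H₁ →L[ℂ] WithLp 2 (H₂ × H₁)) ∘L (inr ℂ H₂ H₁)

def blkUL (T : WithLp 2 (H₂ × H₁) →L[ℂ] WithLp 2 (H₂ × H₁)) : H₂ →L[ℂ] H₂ :=
  blkA₂ ∘L (T ∘L blkB₂)
def blkUR (T : WithLp 2 (H₂ × H₁) →L[ℂ] WithLp 2 (H₂ × H₁)) : H₁ →L[ℂ] H₂ :=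
  blkA₂ ∘L (T ∘L blkB₁)
def blkLL (T : WithLp 2 (H₂ × H₁) →L[ℂ] WithLp 2 (H₂ × H₁)) : H₂ →L[ℂ] H₁ :=
  blkA₁ ∘L (T ∘L blkB₂)
def blkLR (T : WithLp 2 (H₂ × H₁) →L[ℂ] WithLp 2 (H₂ × H₁)) : H₁ →L[ℂ] H₁ :=
  blkA₁ ∘L (T ∘L blkB₁)

lemma cont_conj {E F G K : Type*} [NormedAddCommGroup E] [NormedSpace ℂ E]
    [NormedAddCommGroup F] [NormedSpace ℂ F] [NormedAddCommGroup G] [NormedSpace ℂ G]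
    [NormedAddCommGroup K] [NormedSpace ℂ K] (A : G →L[ℂ] K) (B : E →L[ℂ] F) :
    Continuous fun T : F →L[ℂ] G => A ∘L (T ∘L B) := by
  have : (fun T : F →L[ℂ] G => A ∘L (T ∘L B))
      = ⇑((compL ℂ E G K A).comp ((compL ℂ E F G).flip B)) := rfl
  rw [this]
  exact ContinuousLinearMap.continuous _

lemma cont_blkUL : Continuous (blkUL (H₁ := H₁) (H₂ := H₂)) := cont_conj _ _
lemma cont_blkUR : Continuous (blkUR (H₁ := H₁) (H₂ := H₂)) := cont_conj _ _
lemma cont_blkLL : Continuous (blkLL (H₁ := H₁) (H₂ := H₂)) := cont_conj _ _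
lemma cont_blkLR : Continuous (blkLR (H₁ := H₁) (H₂ := H₂)) := cont_conj _ _

lemma blkUL_blockOp (d : H₂ →L[ℂ] H₂) (x : H₁ →L[ℂ] H₂) (e : H₁ →L[ℂ] H₁) :
    blkUL (blockOp d x e) = d := by
  ext v; simp [blkUL, blkA₂, blkB₂, blockOp_apply]

lemma blkUR_blockOp (d : H₂ →L[ℂ] H₂) (x : H₁ →L[ℂ] H₂) (e : H₁ →L[ℂ] H₁) :
    blkUR (blockOp d x e) = x := by
  ext v; simp [blkUR, blkA₂, blkB₁, blockOp_apply]

lemma blkLL_blockOp (d : H₂ →L[ℂ] H₂) (x : H₁ →L[ℂ] H₂) (e : H₁ →L[ℂ] H₁) :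
    blkLL (blockOp d x e) = 0 := by
  ext v; simp [blkLL, blkA₁, blkB₂, blockOp_apply]

lemma blkLR_blockOp (d : H₂ →L[ℂ] H₂) (x : H₁ →L[ℂ] H₂) (e : H₁ →L[ℂ] H₁) :
    blkLR (blockOp d x e) = e := by
  ext v; simp [blkLR, blkA₁, blkB₁, blockOp_apply]

lemma eq_blockOp_of_blkLL_eq_zero (T : WithLp 2 (H₂ × H₁) →L[ℂ] WithLp 2 (H₂ × H₁))
    (h : blkLL T = 0) : T = blockOp (blkUL T) (blkUR T) (blkLR T) := by
  have key : ∀ w : WithLp 2 (H₂ × H₁), T w =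
      (WithLp.prodContinuousLinearEquiv 2 ℂ H₂ H₁).symm
        (blkUL T ((WithLp.prodContinuousLinearEquiv 2 ℂ H₂ H₁) w).1
          + blkUR T ((WithLp.prodContinuousLinearEquiv 2 ℂ H₂ H₁) w).2,
         blkLL T ((WithLp.prodContinuousLinearEquiv 2 ℂ H₂ H₁) w).1
          + blkLR T ((WithLp.prodContinuousLinearEquiv 2 ℂ H₂ H₁) w).2) := by
    intro w
    set P := WithLp.prodContinuousLinearEquiv 2 ℂ H₂ H₁ with hP
    have hw : w = P.symm ((P w).1, 0) + P.symm (0, (P w).2) := by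
      apply P.injective
      simp [Prod.add_def]
    have h1 : ∀ a : H₂, T (P.symm (a, 0)) = P.symm (blkUL T a, blkLL T a) := by
      intro a
      apply P.injective
      simp only [ContinuousLinearEquiv.apply_symm_apply]
      exact Prod.ext rfl rfl
    have h2 : ∀ b : H₁, T (P.symm (0, b)) = P.symm (blkUR T b, blkLR T b) := by
      intro b
      apply P.injective
      simp only [ContinuousLinearEquiv.apply_symm_apply]
      exact Prod.ext rfl rfl
    calc T w = T (P.symm ((P w).1, 0)) + T (P.symm (0, (P w).2)) := by
          rw [← map_add, ← hw]
      _ = _ := by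
          rw [h1, h2, ← map_add]
          try congr 1
          try first
          | rfl
          | exact Prod.ext rfl rfl
  ext v
  rw [key v]
  simp [blockOp_apply, h]


lemma pw_bound {s : ℝ} (hs0 : 0 ≤ s) (hs1 : s ≤ 1) {m : ℕ} (hm : 1 ≤ m) :
    s * (1 - s) ^ m ≤ 1 / m := by
  have h1s : (0:ℝ) ≤ 1 - s := by linarith
  have hpow : (0:ℝ) ≤ (1 - s) ^ m := pow_nonneg h1s m
  have key : (m : ℝ) * s * (1 - s) ^ m ≤ 1 := by
    calc (m : ℝ) * s * (1 - s) ^ m ≤ (1 + m * s) * (1 - s) ^ m := by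
          apply mul_le_mul_of_nonneg_right _ hpow
          linarith
      _ ≤ (1 + s) ^ m * (1 - s) ^ m := by
          apply mul_le_mul_of_nonneg_right _ hpow
          exact one_add_mul_le_pow (by linarith) m
      _ = (1 - s ^ 2) ^ m := by rw [← mul_pow]; ring_nf
      _ ≤ 1 := by
          apply pow_le_one₀ (by nlinarith)
          nlinarith
  have hmpos : (0:ℝ) < m := by exact_mod_cast hm
  rw [le_div_iff₀ hmpos]
  calc s * (1 - s) ^ m * m = m * s * (1 - s) ^ m := by ring
    _ ≤ 1 := key

lemma cstar_approx {E : Type*} [NormedAddCommGroup E] [InnerProductSpace ℂ E] [CompleteSpace E]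
    (d : E →L[ℂ] E) :
    ∃ e : ℕ → (E →L[ℂ] E),
      (∀ D : Submodule ℂ (E →L[ℂ] E), (∀ a ∈ D, ∀ b ∈ D, a * b ∈ D) →
        star d * d ∈ D → ∀ n, e n ∈ D) ∧
      Tendsto (fun n => d * e n) atTop (nhds d) := by
  rcases subsingleton_or_nontrivial E with hE | hE
  · have hss : ∀ f g : E →L[ℂ] E, f = g := by
      intro f g; ext v; exact Subsingleton.elim _ _
    refine ⟨fun _ => 0, fun D _ _ _ => D.zero_mem, ?_⟩
    have : (fun _ : ℕ => d * 0) = fun _ : ℕ => d := by funext n; exact hss _ _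
    rw [this]; exact tendsto_const_nhds
  · obtain ⟨a, ha_def⟩ : ∃ a, a = star d * d := ⟨_, rfl⟩
    have ha : IsSelfAdjoint a := ha_def ▸ IsSelfAdjoint.star_mul_self d
    obtain ⟨M, hM_def⟩ : ∃ M : ℝ, M = ‖a‖ + 1 := ⟨_, rfl⟩
    have hM : 0 < M := by rw [hM_def]; positivity
    obtain ⟨e, he0, he_succ⟩ :
        ∃ e : ℕ → (E →L[ℂ] E), e 0 = 0 ∧
          ∀ n, e (n + 1) = e n + (M⁻¹ : ℂ) • (a - a * e n) :=
      ⟨fun n => Nat.rec 0 (fun _ en => en + (M⁻¹ : ℂ) • (a - a * en)) n, rfl, fun _ => rfl⟩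
    refine ⟨e, ?_, ?_⟩
    · intro D hmul haD n
      have haD' : a ∈ D := by rw [ha_def]; exact haD
      induction n with
      | zero => rw [he0]; exact D.zero_mem
      | succ n ih =>
          rw [he_succ]
          exact D.add_mem ih (D.smul_mem _ (D.sub_mem haD' (hmul _ haD' _ ih)))
    · obtain ⟨c, hc_def⟩ : ∃ c, c = 1 - M⁻¹ • a := ⟨_, rfl⟩
      have hsmul : ∀ x : E →L[ℂ] E, (M : ℂ)⁻¹ • x = M⁻¹ • x := fun x => by
        rw [← Complex.ofReal_inv, Complex.coe_smul]
      have hb : ∀ n, 1 - e n = c ^ n := by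
        intro n
        induction n with
        | zero => rw [he0, pow_zero, sub_zero]
        | succ n ih =>
            rw [pow_succ', ← ih, he_succ, hsmul, hc_def]
            rw [sub_mul, one_mul, smul_mul_assoc, mul_sub, mul_one]
            abel
      have hcsa : IsSelfAdjoint c := by
        rw [hc_def, IsSelfAdjoint, star_sub, star_one, star_smul, star_trivial, ha.star_eq]
      have hcomm : ∀ n, Commute a (c ^ n) := fun n => by
        rw [hc_def]
        exact ((Commute.one_right a).sub_right ((Commute.refl a).smul_right M⁻¹)).pow_right n
      have hnonneg : 0 ≤ a := ha_def ▸ star_mul_self_nonneg d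
      have hspec : ∀ t ∈ spectrum ℝ a, 0 ≤ t ∧ t ≤ ‖a‖ := by
        intro t ht
        refine ⟨spectrum_nonneg_of_nonneg hnonneg ht, ?_⟩
        have := spectrum.norm_le_norm_of_mem ht
        simpa [abs_of_nonneg (spectrum_nonneg_of_nonneg hnonneg ht)] using this
      have hkey : ∀ n : ℕ, 1 ≤ n → ‖d * c ^ n‖ ≤ Real.sqrt (M / (2 * n)) := by
        intro n hn
        have hcfc : cfc (fun t : ℝ => t * (1 - M⁻¹ * t) ^ (2 * n)) a = a * c ^ (2 * n) := by
          calc cfc (fun t : ℝ => t * (1 - M⁻¹ * t) ^ (2 * n)) a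
              = cfc (fun t : ℝ => t) a * cfc (fun t : ℝ => (1 - M⁻¹ * t) ^ (2 * n)) a :=
                cfc_mul _ _ a (by fun_prop) (by fun_prop)
            _ = a * (cfc (fun t : ℝ => 1 - M⁻¹ * t) a) ^ (2 * n) := by
                rw [cfc_id' ℝ a, cfc_pow (hf := by fun_prop)]
            _ = a * c ^ (2 * n) := by
                congr 1
                rw [cfc_sub (f := fun _ : ℝ => (1 : ℝ)) (g := fun t : ℝ => M⁻¹ * t),
                  cfc_const_mul_id M⁻¹ a ha, cfc_const 1 a ha, map_one, hc_def]
        have hb2 : ‖a * c ^ (2 * n)‖ ≤ M / (2 * n) := by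
          rw [← hcfc]
          apply norm_cfc_le (by positivity)
          intro t ht
          obtain ⟨ht0, htM⟩ := hspec t ht
          have htM' : t ≤ M := by rw [hM_def]; linarith
          have hs0 : 0 ≤ M⁻¹ * t := by positivity
          have hs1 : M⁻¹ * t ≤ 1 := by
            rw [inv_mul_le_iff₀ hM]; linarith
          have hts : t = M * (M⁻¹ * t) := by
            rw [← mul_assoc, mul_inv_cancel₀ hM.ne', one_mul]
          have hbnd := pw_bound hs0 hs1 (m := 2 * n) (by omega)
          push_cast at hbnd
          have hgnn : 0 ≤ t * (1 - M⁻¹ * t) ^ (2 * n) := by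
            apply mul_nonneg ht0
            apply pow_nonneg
            linarith
          rw [Real.norm_eq_abs, abs_of_nonneg hgnn]
          calc t * (1 - M⁻¹ * t) ^ (2 * n) = M * (M⁻¹ * t * (1 - M⁻¹ * t) ^ (2 * n)) := by
                rw [← mul_assoc, ← hts]
            _ ≤ M * (1 / (2 * n)) := mul_le_mul_of_nonneg_left hbnd hM.le
            _ = M / (2 * n) := by ring
        have hsq : ‖d * c ^ n‖ ^ 2 ≤ M / (2 * n) := by
          have h1 : star (d * c ^ n) * (d * c ^ n) = a * c ^ (2 * n) := by
            rw [star_mul, (hcsa.pow n).star_eq]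
            calc c ^ n * star d * (d * c ^ n) = c ^ n * (a * c ^ n) := by
                  rw [ha_def, mul_assoc, mul_assoc]
              _ = a * c ^ (2 * n) := by
                  rw [← mul_assoc, ← (hcomm n).eq, mul_assoc, ← pow_add, two_mul]
          rw [sq, ← CStarRing.norm_star_mul_self, h1]
          exact hb2
        exact (Real.le_sqrt (norm_nonneg _) (div_nonneg hM.le (by positivity))).mpr hsq
      rw [tendsto_iff_norm_sub_tendsto_zero]
      have hdiff : ∀ n, d * e n - d = -(d * c ^ n) := by
        intro n
        rw [← hb n, mul_sub, mul_one]
        abel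
      have hev : ∀ᶠ n : ℕ in atTop, ‖d * e n - d‖ ≤ Real.sqrt (M / (2 * n)) := by
        refine eventually_atTop.2 ⟨1, fun n hn => ?_⟩
        rw [hdiff n, norm_neg]
        exact hkey n hn
      apply squeeze_zero' (Eventually.of_forall fun n => norm_nonneg _) hev
      have h0 : Tendsto (fun n : ℕ => M / (2 * n)) atTop (nhds 0) := by
        apply Tendsto.div_atTop tendsto_const_nhds
        exact (tendsto_natCast_atTop_atTop (R := ℝ)).const_mul_atTop two_pos
      have h1 := (Real.continuous_sqrt.tendsto' 0 0 Real.sqrt_zero).comp h0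
      exact h1


-- csp lemmas
lemma subset_csp {E : Type*} [NormedAddCommGroup E] [NormedSpace ℂ E] (S : Set E) :
    S ⊆ csp S := fun x hx => subset_closure (Submodule.subset_span hx)

lemma csp_subset {E : Type*} [NormedAddCommGroup E] [NormedSpace ℂ E] {S : Set E}
    {M : Submodule ℂ E} (hM : IsClosed (M : Set E)) (h : S ⊆ M) : csp S ⊆ M :=
  closure_minimal (Submodule.span_le.2 h) hM

lemma csp_eq_coe {E : Type*} [NormedAddCommGroup E] [NormedSpace ℂ E] (S : Set E) :
    csp S = ↑((Submodule.span ℂ S).topologicalClosure) := by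
  rw [csp, Submodule.topologicalClosure_coe]

lemma map_csp {E F : Type*} [NormedAddCommGroup E] [NormedSpace ℂ E]
    [NormedAddCommGroup F] [NormedSpace ℂ F] (f : E →L[ℂ] F) {S : Set E} {T : Set F}
    (h : ∀ s ∈ S, f s ∈ csp T) {x : E} (hx : x ∈ csp S) : f x ∈ csp T := by
  have hMc : IsClosed ((Submodule.span ℂ T).topologicalClosure : Set F) :=
    Submodule.isClosed_topologicalClosure _
  have h2 : (Submodule.span ℂ S : Set E) ⊆ f ⁻¹' ((Submodule.span ℂ T).topologicalClosure) := by
    have : Submodule.span ℂ S ≤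
        (Submodule.span ℂ T).topologicalClosure.comap (f : E →ₗ[ℂ] F) := by
      rw [Submodule.span_le]
      intro s hs
      have := h s hs
      rw [csp_eq_coe] at this
      exact this
    exact this
  have h3 : closure (Submodule.span ℂ S : Set E)
      ⊆ f ⁻¹' ((Submodule.span ℂ T).topologicalClosure) :=
    closure_minimal h2 (hMc.preimage f.continuous)
  rw [csp_eq_coe]
  exact h3 hx

-- approximation corollaries
lemma approx_right {E : Type*} [NormedAddCommGroup E] [InnerProductSpace ℂ E] [CompleteSpace E]
    (T : E →L[ℂ] E) (D' : Submodule ℂ (E →L[ℂ] E))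
    (hmul : ∀ a ∈ D', ∀ b ∈ D', a * b ∈ D') (hstar : star T * T ∈ D')
    {P : Set (E →L[ℂ] E)} (hTP : ∀ c ∈ D', T * c ∈ P) : T ∈ csp P := by
  obtain ⟨e, heD, htend⟩ := cstar_approx T
  have he := heD D' hmul hstar
  exact isClosed_closure.mem_of_tendsto htend
    (Filter.Eventually.of_forall fun n => subset_csp P (hTP _ (he n)))

lemma approx_left {E : Type*} [NormedAddCommGroup E] [InnerProductSpace ℂ E] [CompleteSpace E]
    (T : E →L[ℂ] E) (D' : Submodule ℂ (E →L[ℂ] E))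
    (hmul : ∀ a ∈ D', ∀ b ∈ D', a * b ∈ D') (hstarD : ∀ a ∈ D', star a ∈ D')
    (hstar : T * star T ∈ D')
    {P : Set (E →L[ℂ] E)} (hTP : ∀ c ∈ D', c * T ∈ P) : T ∈ csp P := by
  obtain ⟨e, heD, htend⟩ := cstar_approx (star T)
  have he := heD D' hmul (by rwa [star_star])
  have htend' : Filter.Tendsto (fun n => star (e n) * T) Filter.atTop (nhds T) := by
    have h1 := htend.star
    have h2 : (fun n => star (star T * e n)) = fun n => star (e n) * T := by
      funext n; rw [star_mul, star_star]
    rwa [h2, star_star] at h1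
  exact isClosed_closure.mem_of_tendsto htend'
    (Filter.Eventually.of_forall fun n => subset_csp P (hTP _ (hstarD _ (he n))))

-- the CLM x ↦ blockOp 0 x 0
def blockOpXL : (H₁ →L[ℂ] H₂) →L[ℂ] (WithLp 2 (H₂ × H₁) →L[ℂ] WithLp 2 (H₂ × H₁)) :=
  (compL ℂ (WithLp 2 (H₂ × H₁)) H₂ (WithLp 2 (H₂ × H₁)) blkB₂).comp
    ((compL ℂ (WithLp 2 (H₂ × H₁)) H₁ H₂).flip blkA₁)

lemma blockOpXL_apply (x : H₁ →L[ℂ] H₂) : blockOpXL x = blockOp 0 x 0 := by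
  ext v
  simp [blockOpXL, blkB₂, blkA₁, blockOp_apply]

-- block submodules
def subUL (D₂ : Submodule ℂ (H₂ →L[ℂ] H₂)) :
    Submodule ℂ (WithLp 2 (H₂ × H₁) →L[ℂ] WithLp 2 (H₂ × H₁)) where
  carrier := {T | ∃ c ∈ D₂, T = blockOp c 0 0}
  add_mem' := by
    rintro _ _ ⟨c, hc, rfl⟩ ⟨c', hc', rfl⟩
    exact ⟨c + c', D₂.add_mem hc hc', by simpa using (blockOp_add (H₁ := H₁) c c' 0 0 0 0).symm⟩
  zero_mem' := ⟨0, D₂.zero_mem, blockOp_zero.symm⟩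
  smul_mem' := by
    rintro k _ ⟨c, hc, rfl⟩
    exact ⟨k • c, D₂.smul_mem k hc, by simpa using (blockOp_smul (H₁ := H₁) k c 0 0).symm⟩

def subLR (D₁ : Submodule ℂ (H₁ →L[ℂ] H₁)) :
    Submodule ℂ (WithLp 2 (H₂ × H₁) →L[ℂ] WithLp 2 (H₂ × H₁)) where
  carrier := {T | ∃ c ∈ D₁, T = blockOp 0 0 c}
  add_mem' := by
    rintro _ _ ⟨c, hc, rfl⟩ ⟨c', hc', rfl⟩
    exact ⟨c + c', D₁.add_mem hc hc', by simpa using (blockOp_add (H₂ := H₂) 0 0 0 0 c c').symm⟩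
  zero_mem' := ⟨0, D₁.zero_mem, blockOp_zero.symm⟩
  smul_mem' := by
    rintro k _ ⟨c, hc, rfl⟩
    exact ⟨k • c, D₁.smul_mem k hc, by simpa using (blockOp_smul (H₂ := H₂) k 0 0 c).symm⟩

lemma adjoint_zero' : adjoint (0 : H₁ →L[ℂ] H₂) = 0 := by
  simp

lemma blockOp_decomp (d : H₂ →L[ℂ] H₂) (x : H₁ →L[ℂ] H₂) (e : H₁ →L[ℂ] H₁) :
    blockOp d x e = blockOp d 0 0 + blockOp 0 x 0 + blockOp 0 0 e := by
  rw [← blockOp_add, ← blockOp_add]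
  simp

end Stmt12Aux

open Stmt12Aux

set_option maxHeartbeats 2000000

/-- With `A_X = [[D₂, X],[0, D₁]]` built from a Δ-extension of the operator space `X`
(`X = closure span (D₂ X) = closure span (X D₁)` for C*-algebras `D₁, D₂`), the pair
`(A_X, Δ(A_X))` is a Δ-pair: `A_X = closure span (A_X Δ(A_X)) = closure span (Δ(A_X) A_X)`,
where `Δ(A_X) = A_X ∩ (A_X)*`. -/
theorem stmt12 {H₁ H₂ : Type*}
    [NormedAddCommGroup H₁] [InnerProductSpace ℂ H₁] [CompleteSpace H₁]
    [NormedAddCommGroup H₂] [InnerProductSpace ℂ H₂] [CompleteSpace H₂]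
    (X : Submodule ℂ (H₁ →L[ℂ] H₂)) (hXclosed : IsClosed (X : Set (H₁ →L[ℂ] H₂)))
    (D₁ : Submodule ℂ (H₁ →L[ℂ] H₁)) (hD₁closed : IsClosed (D₁ : Set (H₁ →L[ℂ] H₁)))
    (hD₁mul : ∀ a ∈ D₁, ∀ b ∈ D₁, a ∘L b ∈ D₁)
    (hD₁star : ∀ a ∈ D₁, adjoint a ∈ D₁)
    (D₂ : Submodule ℂ (H₂ →L[ℂ] H₂)) (hD₂closed : IsClosed (D₂ : Set (H₂ →L[ℂ] H₂)))
    (hD₂mul : ∀ a ∈ D₂, ∀ b ∈ D₂, a ∘L b ∈ D₂)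
    (hD₂star : ∀ a ∈ D₂, adjoint a ∈ D₂)
    (hX₂ : (X : Set (H₁ →L[ℂ] H₂)) = csp {T | ∃ d ∈ D₂, ∃ x ∈ X, T = d ∘L x})
    (hX₁ : (X : Set (H₁ →L[ℂ] H₂)) = csp {T | ∃ x ∈ X, ∃ d ∈ D₁, T = x ∘L d})
    (AX ΔAX : Set (WithLp 2 (H₂ × H₁) →L[ℂ] WithLp 2 (H₂ × H₁)))
    (hAX : AX = {T | ∃ d₂ ∈ D₂, ∃ x ∈ X, ∃ d₁ ∈ D₁, T = blockOp d₂ x d₁})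
    (hΔAX : ΔAX = AX ∩ {T | ∃ S ∈ AX, T = adjoint S}) :
    AX = csp {T | ∃ a ∈ AX, ∃ c ∈ ΔAX, T = a ∘L c} ∧
    AX = csp {T | ∃ c ∈ ΔAX, ∃ a ∈ AX, T = c ∘L a} := by

  classical
  -- X is a D₂–D₁ bimodule
  have hXD₁ : ∀ x ∈ X, ∀ e ∈ D₁, x ∘L e ∈ X := by
    intro x hx e he
    have hx' : (x : H₁ →L[ℂ] H₂) ∈ csp {T | ∃ x ∈ X, ∃ d ∈ D₁, T = x ∘L d} := by
      rw [← hX₁]; exact hx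
    have hside : ∀ s ∈ {T | ∃ x ∈ X, ∃ d ∈ D₁, T = x ∘L d},
        ((compL ℂ H₁ H₁ H₂).flip e) s ∈ csp {T | ∃ x ∈ X, ∃ d ∈ D₁, T = x ∘L d} := by
      rintro s ⟨x', hx'', dd, hdd, rfl⟩
      apply subset_csp
      refine ⟨x', hx'', dd ∘L e, hD₁mul _ hdd _ he, ?_⟩
      ext v; simp
    have hres := map_csp ((compL ℂ H₁ H₁ H₂).flip e) hside hx'
    rw [← hX₁] at hres
    exact hres
  have hD₂X : ∀ x ∈ X, ∀ e ∈ D₂, e ∘L x ∈ X := by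
    intro x hx e he
    have hx' : (x : H₁ →L[ℂ] H₂) ∈ csp {T | ∃ d ∈ D₂, ∃ x ∈ X, T = d ∘L x} := by
      rw [← hX₂]; exact hx
    have hside : ∀ s ∈ {T | ∃ d ∈ D₂, ∃ x ∈ X, T = d ∘L x},
        (compL ℂ H₁ H₂ H₂ e) s ∈ csp {T | ∃ d ∈ D₂, ∃ x ∈ X, T = d ∘L x} := by
      rintro s ⟨dd, hdd, x', hx'', rfl⟩
      apply subset_csp
      refine ⟨e ∘L dd, hD₂mul _ he _ hdd, x', hx'', ?_⟩
      ext v; simp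
    have hres := map_csp (compL ℂ H₁ H₂ H₂ e) hside hx'
    rw [← hX₂] at hres
    exact hres
  subst hAX
  subst hΔAX
  set A : Set (WithLp 2 (H₂ × H₁) →L[ℂ] WithLp 2 (H₂ × H₁)) :=
    {T | ∃ d₂ ∈ D₂, ∃ x ∈ X, ∃ d₁ ∈ D₁, T = blockOp d₂ x d₁} with hA
  -- characterization of the diagonal
  have hΔeq : (A ∩ {T | ∃ S ∈ A, T = adjoint S})
      = {T | ∃ d₂ ∈ D₂, ∃ d₁ ∈ D₁, T = blockOp d₂ 0 d₁} := by
    ext T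
    simp only [hA, Set.mem_inter_iff, Set.mem_setOf_eq]
    constructor
    · rintro ⟨⟨e₂, he₂, y, hy, e₁, he₁, rfl⟩, S, ⟨d₂, hd₂, x, hx, d₁, hd₁, rfl⟩, hT⟩
      have hy0 : y = 0 := offdiag_eq_zero hT
      exact ⟨e₂, he₂, e₁, he₁, by rw [hy0]⟩
    · rintro ⟨d₂, hd₂, d₁, hd₁, rfl⟩
      refine ⟨⟨d₂, hd₂, 0, X.zero_mem, d₁, hd₁, rfl⟩,
        ⟨blockOp (adjoint d₂) 0 (adjoint d₁),
          ⟨adjoint d₂, hD₂star _ hd₂, 0, X.zero_mem, adjoint d₁, hD₁star _ hd₁, rfl⟩, ?_⟩⟩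
      rw [adjoint_blockOp_diag, adjoint_adjoint, adjoint_adjoint]
  rw [hΔeq]
  set Δs : Set (WithLp 2 (H₂ × H₁) →L[ℂ] WithLp 2 (H₂ × H₁)) :=
    {T | ∃ d₂ ∈ D₂, ∃ d₁ ∈ D₁, T = blockOp d₂ 0 d₁} with hΔs
  -- A as a closed submodule
  let N : Submodule ℂ (WithLp 2 (H₂ × H₁) →L[ℂ] WithLp 2 (H₂ × H₁)) :=
    { carrier := A
      add_mem' := by
        rintro _ _ ⟨d₂, h1, x, h2, d₁, h3, rfl⟩ ⟨e₂, g1, y, g2, e₁, g3, rfl⟩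
        exact ⟨d₂ + e₂, D₂.add_mem h1 g1, x + y, X.add_mem h2 g2, d₁ + e₁,
          D₁.add_mem h3 g3, (blockOp_add d₂ e₂ x y d₁ e₁).symm⟩
      zero_mem' := ⟨0, D₂.zero_mem, 0, X.zero_mem, 0, D₁.zero_mem, blockOp_zero.symm⟩
      smul_mem' := by
        rintro k _ ⟨d₂, h1, x, h2, d₁, h3, rfl⟩
        exact ⟨k • d₂, D₂.smul_mem k h1, k • x, X.smul_mem k h2, k • d₁,
          D₁.smul_mem k h3, (blockOp_smul k d₂ x d₁).symm⟩ }
  have hNclosed : IsClosed (N : Set (WithLp 2 (H₂ × H₁) →L[ℂ] WithLp 2 (H₂ × H₁))) := by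
    have hNeq : (N : Set (WithLp 2 (H₂ × H₁) →L[ℂ] WithLp 2 (H₂ × H₁)))
        = blkUL ⁻¹' ↑D₂ ∩ blkUR ⁻¹' ↑X ∩ blkLR ⁻¹' ↑D₁ ∩ blkLL ⁻¹' {0} := by
      ext T
      constructor
      · rintro ⟨d₂, h1, x, h2, d₁, h3, rfl⟩
        refine ⟨⟨⟨?_, ?_⟩, ?_⟩, ?_⟩
        · rw [Set.mem_preimage, blkUL_blockOp]; exact h1
        · rw [Set.mem_preimage, blkUR_blockOp]; exact h2
        · rw [Set.mem_preimage, blkLR_blockOp]; exact h3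
        · rw [Set.mem_preimage, blkLL_blockOp]; exact rfl
      · rintro ⟨⟨⟨h1, h2⟩, h3⟩, h4⟩
        exact ⟨blkUL T, h1, blkUR T, h2, blkLR T, h3,
          eq_blockOp_of_blkLL_eq_zero T (by simpa using h4)⟩
    rw [hNeq]
    exact (((hD₂closed.preimage (cont_blkUL (H₁ := H₁) (H₂ := H₂))).inter (hXclosed.preimage (cont_blkUR (H₁ := H₁) (H₂ := H₂)))).inter
      (hD₁closed.preimage (cont_blkLR (H₁ := H₁) (H₂ := H₂)))).inter (isClosed_singleton.preimage (cont_blkLL (H₁ := H₁) (H₂ := H₂)))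
  -- membership facts, used repeatedly
  have hULmul : ∀ a ∈ subUL (H₁ := H₁) D₂, ∀ b ∈ subUL (H₁ := H₁) D₂, a * b ∈ subUL (H₁ := H₁) D₂ := by
    rintro _ ⟨c, hc, rfl⟩ _ ⟨c', hc', rfl⟩
    refine ⟨c ∘L c', hD₂mul _ hc _ hc', ?_⟩
    rw [mul_def, blockOp_comp]
    simp
  have hULstar : ∀ a ∈ subUL (H₁ := H₁) D₂, star a ∈ subUL (H₁ := H₁) D₂ := by
    rintro _ ⟨c, hc, rfl⟩
    refine ⟨adjoint c, hD₂star _ hc, ?_⟩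
    rw [star_eq_adjoint, adjoint_blockOp_diag]
    simp
  have hLRmul : ∀ a ∈ subLR (H₂ := H₂) D₁, ∀ b ∈ subLR (H₂ := H₂) D₁, a * b ∈ subLR (H₂ := H₂) D₁ := by
    rintro _ ⟨c, hc, rfl⟩ _ ⟨c', hc', rfl⟩
    refine ⟨c ∘L c', hD₁mul _ hc _ hc', ?_⟩
    rw [mul_def, blockOp_comp]
    simp
  have hLRstar : ∀ a ∈ subLR (H₂ := H₂) D₁, star a ∈ subLR (H₂ := H₂) D₁ := by
    rintro _ ⟨c, hc, rfl⟩
    refine ⟨adjoint c, hD₁star _ hc, ?_⟩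
    rw [star_eq_adjoint, adjoint_blockOp_diag]
    simp
  have hULss : ∀ (c : H₂ →L[ℂ] H₂), c ∈ D₂ →
      star (blockOp c (0 : H₁ →L[ℂ] H₂) 0) * blockOp c (0 : H₁ →L[ℂ] H₂) 0 ∈ subUL (H₁ := H₁) D₂ := by
    intro c hc
    refine ⟨adjoint c ∘L c, hD₂mul _ (hD₂star _ hc) _ hc, ?_⟩
    rw [star_eq_adjoint, adjoint_blockOp_diag, mul_def, blockOp_comp]
    simp
  have hULms : ∀ (c : H₂ →L[ℂ] H₂), c ∈ D₂ →
      blockOp c (0 : H₁ →L[ℂ] H₂) 0 * star (blockOp c (0 : H₁ →L[ℂ] H₂) 0) ∈ subUL (H₁ := H₁) D₂ := by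
    intro c hc
    refine ⟨c ∘L adjoint c, hD₂mul _ hc _ (hD₂star _ hc), ?_⟩
    rw [star_eq_adjoint, adjoint_blockOp_diag, mul_def, blockOp_comp]
    simp
  have hLRss : ∀ (c : H₁ →L[ℂ] H₁), c ∈ D₁ →
      star (blockOp (0 : H₂ →L[ℂ] H₂) 0 c) * blockOp (0 : H₂ →L[ℂ] H₂) 0 c ∈ subLR (H₂ := H₂) D₁ := by
    intro c hc
    refine ⟨adjoint c ∘L c, hD₁mul _ (hD₁star _ hc) _ hc, ?_⟩
    rw [star_eq_adjoint, adjoint_blockOp_diag, mul_def, blockOp_comp]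
    simp
  have hLRms : ∀ (c : H₁ →L[ℂ] H₁), c ∈ D₁ →
      blockOp (0 : H₂ →L[ℂ] H₂) 0 c * star (blockOp (0 : H₂ →L[ℂ] H₂) 0 c) ∈ subLR (H₂ := H₂) D₁ := by
    intro c hc
    refine ⟨c ∘L adjoint c, hD₁mul _ hc _ (hD₁star _ hc), ?_⟩
    rw [star_eq_adjoint, adjoint_blockOp_diag, mul_def, blockOp_comp]
    simp
  have hmemA2 : ∀ (c : H₂ →L[ℂ] H₂), c ∈ D₂ → blockOp c (0 : H₁ →L[ℂ] H₂) 0 ∈ A :=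
    fun c hc => ⟨c, hc, 0, X.zero_mem, 0, D₁.zero_mem, rfl⟩
  have hmemA1 : ∀ (c : H₁ →L[ℂ] H₁), c ∈ D₁ → blockOp (0 : H₂ →L[ℂ] H₂) 0 c ∈ A :=
    fun c hc => ⟨0, D₂.zero_mem, 0, X.zero_mem, c, hc, rfl⟩
  have hmemAx : ∀ (x : H₁ →L[ℂ] H₂), x ∈ X → blockOp 0 x 0 ∈ A :=
    fun x hx => ⟨0, D₂.zero_mem, x, hx, 0, D₁.zero_mem, rfl⟩
  have hmemΔ2 : ∀ (c : H₂ →L[ℂ] H₂), c ∈ D₂ → blockOp c (0 : H₁ →L[ℂ] H₂) 0 ∈ Δs :=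
    fun c hc => ⟨c, hc, 0, D₁.zero_mem, rfl⟩
  have hmemΔ1 : ∀ (c : H₁ →L[ℂ] H₁), c ∈ D₁ → blockOp (0 : H₂ →L[ℂ] H₂) 0 c ∈ Δs :=
    fun c hc => ⟨0, D₂.zero_mem, c, hc, rfl⟩
  constructor
  · -- right version : A = csp (A ∘ Δs)
    apply Set.Subset.antisymm
    · rintro T ⟨d₂, h1, x, h2, d₁, h3, rfl⟩
      have hp1 : blockOp d₂ (0 : H₁ →L[ℂ] H₂) 0 ∈
          csp {T | ∃ a ∈ A, ∃ c ∈ Δs, T = a ∘L c} := by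
        apply approx_right _ (subUL D₂) hULmul (hULss d₂ h1)
        rintro _ ⟨c, hc, rfl⟩
        exact ⟨blockOp d₂ 0 0, hmemA2 d₂ h1, blockOp c 0 0, hmemΔ2 c hc, mul_def _ _⟩
      have hp3 : blockOp (0 : H₂ →L[ℂ] H₂) 0 d₁ ∈
          csp {T | ∃ a ∈ A, ∃ c ∈ Δs, T = a ∘L c} := by
        apply approx_right _ (subLR D₁) hLRmul (hLRss d₁ h3)
        rintro _ ⟨c, hc, rfl⟩
        exact ⟨blockOp 0 0 d₁, hmemA1 d₁ h3, blockOp 0 0 c, hmemΔ1 c hc, mul_def _ _⟩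
      have hp2 : blockOp (0 : H₂ →L[ℂ] H₂) x 0 ∈
          csp {T | ∃ a ∈ A, ∃ c ∈ Δs, T = a ∘L c} := by
        have hx' : (x : H₁ →L[ℂ] H₂) ∈ csp {T | ∃ x ∈ X, ∃ d ∈ D₁, T = x ∘L d} := by
          rw [← hX₁]; exact h2
        have hside : ∀ s ∈ {T | ∃ x ∈ X, ∃ d ∈ D₁, T = x ∘L d},
            blockOpXL s ∈ csp {T | ∃ a ∈ A, ∃ c ∈ Δs, T = a ∘L c} := by
          rintro s ⟨x', hx'', dd, hdd, rfl⟩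
          apply subset_csp
          refine ⟨blockOp 0 x' 0, hmemAx x' hx'', blockOp 0 0 dd, hmemΔ1 dd hdd, ?_⟩
          rw [blockOpXL_apply, blockOp_comp]
          simp
        have hres := map_csp blockOpXL hside hx'
        rwa [blockOpXL_apply] at hres
      rw [blockOp_decomp, csp_eq_coe]
      rw [csp_eq_coe] at hp1 hp2 hp3
      exact Submodule.add_mem _ (Submodule.add_mem _ hp1 hp2) hp3
    · have hsub : {T | ∃ a ∈ A, ∃ c ∈ Δs, T = a ∘L c} ⊆ ↑N := by
        rintro _ ⟨a, ⟨d₂, h1, x, h2, d₁, h3, rfl⟩, c, ⟨e₂, g1, e₁, g3, rfl⟩, rfl⟩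
        refine ⟨d₂ ∘L e₂, hD₂mul _ h1 _ g1, x ∘L e₁, hXD₁ _ h2 _ g3, d₁ ∘L e₁,
          hD₁mul _ h3 _ g3, ?_⟩
        rw [blockOp_comp]
        simp
      exact csp_subset hNclosed hsub
  · -- left version : A = csp (Δs ∘ A)
    apply Set.Subset.antisymm
    · rintro T ⟨d₂, h1, x, h2, d₁, h3, rfl⟩
      have hp1 : blockOp d₂ (0 : H₁ →L[ℂ] H₂) 0 ∈
          csp {T | ∃ c ∈ Δs, ∃ a ∈ A, T = c ∘L a} := by
        apply approx_left _ (subUL D₂) hULmul hULstar (hULms d₂ h1)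
        rintro _ ⟨c, hc, rfl⟩
        exact ⟨blockOp c 0 0, hmemΔ2 c hc, blockOp d₂ 0 0, hmemA2 d₂ h1, mul_def _ _⟩
      have hp3 : blockOp (0 : H₂ →L[ℂ] H₂) 0 d₁ ∈
          csp {T | ∃ c ∈ Δs, ∃ a ∈ A, T = c ∘L a} := by
        apply approx_left _ (subLR D₁) hLRmul hLRstar (hLRms d₁ h3)
        rintro _ ⟨c, hc, rfl⟩
        exact ⟨blockOp 0 0 c, hmemΔ1 c hc, blockOp 0 0 d₁, hmemA1 d₁ h3, mul_def _ _⟩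
      have hp2 : blockOp (0 : H₂ →L[ℂ] H₂) x 0 ∈
          csp {T | ∃ c ∈ Δs, ∃ a ∈ A, T = c ∘L a} := by
        have hx' : (x : H₁ →L[ℂ] H₂) ∈ csp {T | ∃ d ∈ D₂, ∃ x ∈ X, T = d ∘L x} := by
          rw [← hX₂]; exact h2
        have hside : ∀ s ∈ {T | ∃ d ∈ D₂, ∃ x ∈ X, T = d ∘L x},
            blockOpXL s ∈ csp {T | ∃ c ∈ Δs, ∃ a ∈ A, T = c ∘L a} := by
          rintro s ⟨dd, hdd, x', hx'', rfl⟩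
          apply subset_csp
          refine ⟨blockOp dd 0 0, hmemΔ2 dd hdd, blockOp 0 x' 0, hmemAx x' hx'', ?_⟩
          rw [blockOpXL_apply, blockOp_comp]
          simp
        have hres := map_csp blockOpXL hside hx'
        rwa [blockOpXL_apply] at hres
      rw [blockOp_decomp, csp_eq_coe]
      rw [csp_eq_coe] at hp1 hp2 hp3
      exact Submodule.add_mem _ (Submodule.add_mem _ hp1 hp2) hp3
    · have hsub : {T | ∃ c ∈ Δs, ∃ a ∈ A, T = c ∘L a} ⊆ ↑N := by
        rintro _ ⟨c, ⟨e₂, g1, e₁, g3, rfl⟩, a, ⟨d₂, h1, x, h2, d₁, h3, rfl⟩, rfl⟩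
        refine ⟨e₂ ∘L d₂, hD₂mul _ g1 _ h1, e₂ ∘L x, hD₂X _ h2 _ g1, e₁ ∘L d₁,
          hD₁mul _ g3 _ h3, ?_⟩
        rw [blockOp_comp]
        simp
      exact csp_subset hNclosed hsub
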